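/- Let K be a commutative ring. If a K-algebra A is locally finite (every finite subset is contained in a K-subalgebra that is finitely generated as a K-module), then any quotient algebra of A and any subalgebra of a locally finite algebra of the form {x ∈ M_n(K) | xN ≤ N} obtained as image is locally finite. In particular, for a finitely generated K-module M, End_K(M) is locally finite. -/

import Mathlib

set_option maxHeartbeats 1000000
set_option synthInstance.maxHeartbeats 400000

open Submodule

/-- A `K`-algebra `A` is locally finite if every finite subset of `A` is contained in a
`K`-subalgebra which is finitely generated as a `K`-module. -/
def IsLocallyFiniteAlgebra (K A : Type*) [CommRing K] [Ring A] [Algebra K A] : Prop :=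
  ∀ s : Finset A, ∃ S : Subalgebra K A, (↑s : Set A) ⊆ (S : Set A) ∧ Module.Finite K S


/-- If `s` is a finite subset of a subalgebra `S'` that is finitely generated as a module,
then the subalgebra generated by `s` is finitely generated as a module. -/
lemma adjoin_finite_of_subset_finite {K A : Type*} [CommRing K] [Ring A] [Algebra K A]
    (S' : Subalgebra K A) (hS' : Module.Finite K S') (s : Finset A)
    (hs : (↑s : Set A) ⊆ (S' : Set A)) :
    Module.Finite K (Algebra.adjoin K (↑s : Set A)) := by
  classical
  obtain ⟨t, ht⟩ : (Subalgebra.toSubmodule S').FG := Module.Finite.iff_fg.mp hS'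
  set t' : Finset A := insert 1 t with ht'
  have htsub : (↑t : Set A) ⊆ (S' : Set A) := by
    intro x hx
    have : x ∈ span K (↑t : Set A) := Submodule.subset_span hx
    rw [ht] at this
    exact this
  have ht'sub : (↑t' : Set A) ⊆ (S' : Set A) := by
    rw [Finset.coe_insert]
    exact Set.insert_subset S'.one_mem htsub
  have hspan : ∀ y ∈ S', y ∈ span K (↑t' : Set A) := by
    intro y hy
    apply span_mono (s := (↑t : Set A)) (by simp [ht', Finset.coe_insert, Set.subset_insert])
    rw [ht]; exact hy
  -- coefficient functions
  have hcoefmul : ∀ u v : ↥t', ∃ f : A → K, ∑ i ∈ t', f i • i = (u : A) * v := by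
    intro u v
    exact (mem_span_finset.mp (hspan _ (S'.mul_mem (ht'sub u.2) (ht'sub v.2)))).imp fun _ h => h.2
  have hcoefs : ∀ x : ↥s, ∃ f : A → K, ∑ i ∈ t', f i • i = (x : A) := by
    intro x
    exact (mem_span_finset.mp (hspan _ (hs x.2))).imp fun _ h => h.2
  choose F hF using hcoefmul
  choose G hG using hcoefs
  -- the noetherian base ring
  let ι : Type _ := ((↥t' × ↥t') × ↥t') ⊕ (↥s × ↥t')
  let c : ι → K := fun z => match z with
    | .inl ((u, v), i) => F u v i
    | .inr (x, i) => G x i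
  let R : Type _ := MvPolynomial ι ℤ
  let ρ : R →+* K := MvPolynomial.eval₂Hom (Int.castRingHom K) c
  letI : Algebra R K := ρ.toAlgebra
  letI : Algebra R A := RingHom.toAlgebra' ((algebraMap K A).comp ρ)
    (fun c x => Algebra.commutes (ρ c) x)
  haveI : IsScalarTower R K A := IsScalarTower.of_algebraMap_eq fun _ => rfl
  haveI : IsNoetherianRing R := inferInstance
  have hsmul : ∀ (r : R) (a : A), r • a = ρ r • a := fun r a => by
    rw [show ρ r = algebraMap R K r from rfl, algebraMap_smul]
  -- the finitely generated R-submodule spanned by t'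
  set N₀ : Submodule R A := span R (↑t' : Set A) with hN₀
  have hmulmem : ∀ u v : ↥t', (u : A) * v ∈ N₀ := by
    intro u v
    rw [← hF u v, ← Finset.sum_attach t' (fun i => F u v i • i)]
    refine Submodule.sum_mem _ fun i _ => ?_
    have : F u v i • (i : A) = (MvPolynomial.X (Sum.inl ((u, v), i)) : R) • (i : A) := by
      rw [hsmul]
      congr 1
      exact (MvPolynomial.eval₂Hom_X' (Int.castRingHom K) c (Sum.inl ((u, v), i))).symm
    rw [this]
    exact Submodule.smul_mem _ _ (Submodule.subset_span i.2)
  have hsmem : ∀ x : ↥s, (x : A) ∈ N₀ := by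
    intro x
    rw [← hG x, ← Finset.sum_attach t' (fun i => G x i • i)]
    refine Submodule.sum_mem _ fun i _ => ?_
    have : G x i • (i : A) = (MvPolynomial.X (Sum.inr (x, i)) : R) • (i : A) := by
      rw [hsmul]
      congr 1
      exact (MvPolynomial.eval₂Hom_X' (Int.castRingHom K) c (Sum.inr (x, i))).symm
    rw [this]
    exact Submodule.smul_mem _ _ (Submodule.subset_span i.2)
  have hmulN₀ : ∀ a ∈ N₀, ∀ b ∈ N₀, a * b ∈ N₀ := by
    have : N₀ * N₀ ≤ N₀ := by
      rw [hN₀, Submodule.span_mul_span, Submodule.span_le]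
      rintro z ⟨u, hu, v, hv, rfl⟩
      exact hmulmem ⟨u, hu⟩ ⟨v, hv⟩
    exact fun a ha b hb => Submodule.mul_le.mp this a ha b hb
  have hclos : (↑(Submonoid.closure (↑s : Set A)) : Set A) ⊆ (N₀ : Set A) := by
    intro z hz
    induction hz using Submonoid.closure_induction with
    | mem x hx => exact hsmem ⟨x, hx⟩
    | one => exact Submodule.subset_span (Finset.mem_insert_self 1 t)
    | mul x y _ _ hx hy => exact hmulN₀ x hx y hy
  set C₀ : Submodule R A := span R (↑(Submonoid.closure (↑s : Set A)) : Set A) with hC₀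
  have hC₀le : C₀ ≤ N₀ := Submodule.span_le.mpr hclos
  haveI : IsNoetherian R ↥N₀ := isNoetherian_of_fg_of_noetherian N₀ ⟨t', rfl⟩
  have hC₀fg : C₀.FG := by
    have h1 : (C₀.comap N₀.subtype).FG := IsNoetherian.noetherian _
    have h2 : (C₀.comap N₀.subtype).map N₀.subtype = C₀ := by
      rw [Submodule.map_comap_subtype, inf_eq_right.mpr hC₀le]
    rw [← h2]
    exact h1.map _
  obtain ⟨g, hg⟩ := hC₀fg
  have e1 : span K (↑(Submonoid.closure (↑s : Set A)) : Set A) = span K (↑g : Set A) := by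
    apply le_antisymm
    · rw [Submodule.span_le]
      intro z hz
      have : z ∈ C₀ := Submodule.subset_span hz
      rw [← hg] at this
      exact Submodule.span_le_restrictScalars R K (↑g : Set A) this
    · rw [Submodule.span_le]
      intro z hz
      have : z ∈ C₀ := hg ▸ Submodule.subset_span hz
      rw [hC₀] at this
      exact Submodule.span_le_restrictScalars R K _ this
  have hfg : (Subalgebra.toSubmodule (Algebra.adjoin K (↑s : Set A))).FG := by
    rw [Algebra.adjoin_eq_span, e1]
    exact ⟨g, rfl⟩
  exact Module.Finite.iff_fg.mpr hfg

lemma isLocallyFiniteAlgebra_of_finite {K A : Type*} [CommRing K] [Ring A] [Algebra K A]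
    [Module.Finite K A] : IsLocallyFiniteAlgebra K A := fun _ =>
  ⟨⊤, fun x _ => trivial, Module.Finite.equiv Subalgebra.topEquiv.symm.toLinearEquiv⟩

lemma isLocallyFiniteAlgebra_of_surjective {K A B : Type*} [CommRing K] [Ring A] [Ring B]
    [Algebra K A] [Algebra K B] (φ : A →ₐ[K] B) (hφ : Function.Surjective φ)
    (hA : IsLocallyFiniteAlgebra K A) : IsLocallyFiniteAlgebra K B := by
  classical
  intro s
  obtain ⟨S', hsub, hfin⟩ := hA (s.image (Function.surjInv hφ))
  refine ⟨S'.map φ, ?_, ?_⟩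
  · intro b hb
    exact ⟨Function.surjInv hφ b,
      hsub (Finset.mem_coe.mpr (Finset.mem_image_of_mem _ hb)), Function.surjInv_eq hφ b⟩
  · have hfg : (Subalgebra.toSubmodule (S'.map φ)).FG := by
      rw [Subalgebra.map_toSubmodule]
      exact (Module.Finite.iff_fg.mp hfin).map _
    exact Module.Finite.iff_fg.mpr hfg

lemma isLocallyFiniteAlgebra_subalgebra {K A : Type*} [CommRing K] [Ring A] [Algebra K A]
    (T : Subalgebra K A) (hA : IsLocallyFiniteAlgebra K A) : IsLocallyFiniteAlgebra K T := by
  classical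
  intro s
  obtain ⟨S', hsub, hfin⟩ := hA (s.image T.val)
  haveI hkey := adjoin_finite_of_subset_finite S' hfin (s.image T.val) hsub
  refine ⟨Algebra.adjoin K (↑s : Set T), Algebra.subset_adjoin, ?_⟩
  have hmap : (Algebra.adjoin K (↑s : Set T)).map T.val
      = Algebra.adjoin K (↑(s.image T.val) : Set A) := by
    rw [AlgHom.map_adjoin]
    congr 1
    simp
  have e : ↥(Algebra.adjoin K (↑s : Set T)) ≃ₐ[K]
      ↥(Algebra.adjoin K (↑(s.image T.val) : Set A)) :=
    (Subalgebra.equivMapOfInjective _ T.val Subtype.val_injective).trans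
      (Subalgebra.equivOfEq _ _ hmap)
  exact Module.Finite.equiv e.symm.toLinearEquiv

/-- The stabilizer of a submodule, as a subalgebra of the endomorphism algebra. -/
def stabilizerSubalgebra (K V : Type*) [CommRing K] [AddCommGroup V] [Module K V]
    (N : Submodule K V) : Subalgebra K (Module.End K V) where
  carrier := {x | ∀ v ∈ N, x v ∈ N}
  mul_mem' := fun hx hy v hv => hx _ (hy _ hv)
  add_mem' := fun hx hy v hv => N.add_mem (hx v hv) (hy v hv)
  algebraMap_mem' := fun k v hv => by
    simpa [Module.algebraMap_end_apply] using N.smul_mem k hv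

lemma isLocallyFiniteAlgebra_end {K M : Type*} [CommRing K] [AddCommGroup M] [Module K M]
    (hM : Module.Finite K M) : IsLocallyFiniteAlgebra K (Module.End K M) := by
  obtain ⟨n, π, hπ⟩ := Module.Finite.exists_fin' K M
  set N := LinearMap.ker π with hN
  set T := stabilizerSubalgebra K (Fin n → K) N with hT
  set e : ((Fin n → K) ⧸ N) ≃ₗ[K] M := π.quotKerEquivOfSurjective hπ with he
  -- the algebra map from the stabilizer to the endomorphisms of M
  have hmapQ : ∀ x : T, N ≤ N.comap (x : Module.End K (Fin n → K)) := fun x v hv => x.2 v hv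
  set φ₀ : T → Module.End K M := fun x =>
    (e.toLinearMap.comp (N.mapQ N (x.1 : (Fin n → K) →ₗ[K] (Fin n → K)) (hmapQ x))).comp e.symm.toLinearMap with hφ₀
  have hcomm : ∀ (x : T) (v : Fin n → K), φ₀ x (π v) = π ((x : Module.End K (Fin n → K)) v) := by
    intro x v
    have h1 : e (Submodule.Quotient.mk v) = π v := rfl
    have h2 : e.symm (π v) = Submodule.Quotient.mk v := by rw [← h1, LinearEquiv.symm_apply_apply]
    simp only [hφ₀, LinearMap.comp_apply, LinearEquiv.coe_coe, h2, Submodule.mapQ_apply]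
    rfl
  have hext : ∀ (x : T) (f : Module.End K M),
      (∀ v : Fin n → K, f (π v) = π ((x : Module.End K (Fin n → K)) v)) → φ₀ x = f := by
    intro x f hf
    ext m
    obtain ⟨v, rfl⟩ := hπ m
    rw [hcomm, hf]
  set φ : T →ₐ[K] Module.End K M :=
    { toFun := φ₀
      map_one' := by
        refine hext 1 1 fun v => rfl
      map_mul' := fun x y => by
        refine hext (x * y) (φ₀ x * φ₀ y) fun v => ?_
        have h0 : (φ₀ x * φ₀ y) (π v) = φ₀ x (φ₀ y (π v)) := rfl
        rw [h0, hcomm y, hcomm x]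
        rfl
      map_zero' := by
        refine hext 0 0 fun v => ?_
        simp
      map_add' := fun x y => by
        refine hext (x + y) (φ₀ x + φ₀ y) fun v => ?_
        have h0 : (φ₀ x + φ₀ y) (π v) = φ₀ x (π v) + φ₀ y (π v) := rfl
        rw [h0, hcomm x, hcomm y, ← map_add]
        rfl
      commutes' := fun k => by
        refine hext (algebraMap K T k) (algebraMap K (Module.End K M) k) fun v => ?_
        have h1 : ((algebraMap K (Module.End K M)) k) (π v) = k • π v := rfl
        have h2 : ((algebraMap K T k : T) : Module.End K (Fin n → K)) v = k • v := rfl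
        rw [h1, h2]
        exact (map_smul π k v).symm } with hφdef
  have hφs : Function.Surjective φ := by
    intro f
    obtain ⟨x, hx⟩ := Module.projective_lifting_property π (f.comp π) hπ
    have hxT : x ∈ T := by
      intro v hv
      have : π (x v) = f (π v) := by rw [← LinearMap.comp_apply, hx]; rfl
      rw [hN, LinearMap.mem_ker] at hv ⊢
      rw [this, hv, map_zero]
    refine ⟨⟨x, hxT⟩, hext ⟨x, hxT⟩ f fun v => ?_⟩
    have := LinearMap.congr_fun hx v
    simpa using this.symm
  haveI : Module.Finite K (Module.End K (Fin n → K)) := inferInstance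
  exact isLocallyFiniteAlgebra_of_surjective φ hφs
    (isLocallyFiniteAlgebra_subalgebra T isLocallyFiniteAlgebra_of_finite)

/-- Quotients (i.e. surjective images) of locally finite algebras are locally finite,
subalgebras of locally finite algebras are locally finite, and for a finitely generated
`K`-module `M` the endomorphism algebra `End_K(M)` is locally finite. -/
theorem locally_finite_closure_and_end
    (K : Type*) [CommRing K] :
    (∀ (A B : Type*) [Ring A] [Ring B] [Algebra K A] [Algebra K B]
        (φ : A →ₐ[K] B), Function.Surjective φ →
        IsLocallyFiniteAlgebra K A → IsLocallyFiniteAlgebra K B) ∧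
    (∀ (A : Type*) [Ring A] [Algebra K A] (S : Subalgebra K A),
        IsLocallyFiniteAlgebra K A → IsLocallyFiniteAlgebra K S) ∧
    (∀ (M : Type*) [AddCommGroup M] [Module K M], Module.Finite K M →
        IsLocallyFiniteAlgebra K (Module.End K M)) := by
  exact ⟨fun A B _ _ _ _ φ hφ hA => isLocallyFiniteAlgebra_of_surjective φ hφ hA,
    fun A _ _ S hA => isLocallyFiniteAlgebra_subalgebra S hA,
    fun M _ _ hM => isLocallyFiniteAlgebra_end hM⟩
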